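/- Let n = n(ξ, η) ∈ N′ (i.e. η invertible) and let m(g, h) be the element of the Levi subgroup M acting as g ∈ GL(W) on W, as the isometry h on X, and correspondingly on W′. Then Norm(m(g,h) n m(g,h)^{−1}) = h ∘ Norm(n) ∘ h^{−1}. Moreover, for any g ∈ GL(W), the pair (gξ, gηg*) satisfies the defining relation and Norm(n(ξ, η)) = Norm(n(gξ, gηg*)). -/

import Mathlib

open LinearMap Function Module

/-- The ambient setup of the paper: `V = W × X × W'` carries a nondegenerate symmetric or
antisymmetric bilinear form `Φ` (over a field of characteristic not two), the subspaces
`W` and `W'` are totally isotropic, and `X` is orthogonal to `W + W'`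
(so that `X = (W + W')^⊥`). -/
structure GSSetup (F W X W' : Type) [Field F]
    [AddCommGroup W] [Module F W] [AddCommGroup X] [Module F X]
    [AddCommGroup W'] [Module F W'] : Type where
  Φ : (W × X × W') →ₗ[F] (W × X × W') →ₗ[F] F
  hchar : (2 : F) ≠ 0
  nondeg : ∀ v : W × X × W', (∀ u : W × X × W', Φ v u = 0) → v = 0
  symm_or_alt : (∀ a b : W × X × W', Φ a b = Φ b a) ∨ (∀ a b : W × X × W', Φ a b = - Φ b a)
  isoW : ∀ w₁ w₂ : W, Φ (w₁, 0, 0) (w₂, 0, 0) = 0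
  isoW' : ∀ w₁' w₂' : W', Φ (0, 0, w₁') (0, 0, w₂') = 0
  orthX : ∀ (x : X) (w : W) (w' : W'), Φ (0, x, 0) (w, 0, w') = 0

variable {F W X W' : Type} [Field F]
  [AddCommGroup W] [Module F W] [AddCommGroup X] [Module F X]
  [AddCommGroup W'] [Module F W']

/-- The orthogonal complement, inside `X`, of a subspace `Y ⊆ X` (with respect to the
restriction of `Φ` to `X`). -/
def perpY (S : GSSetup F W X W') (Y : Submodule F X) : Submodule F X where
  carrier := {x : X | ∀ y ∈ Y, S.Φ (0, x, 0) (0, y, 0) = 0}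
  add_mem' := by
    intro a b ha hb y hy
    have h : ((0 : W), a + b, (0 : W')) = ((0 : W), a, (0 : W')) + ((0 : W), b, (0 : W')) := by
      simp
    rw [h, map_add, LinearMap.add_apply, ha y hy, hb y hy, add_zero]
  zero_mem' := by
    intro y hy
    show S.Φ 0 (0, y, 0) = 0
    rw [map_zero]
    rfl
  smul_mem' := by
    intro c a ha y hy
    have h : ((0 : W), c • a, (0 : W')) = c • ((0 : W), a, (0 : W')) := by simp
    rw [h, map_smul, LinearMap.smul_apply, ha y hy, smul_zero]

/-- The map `Ξ : End(X) → End(W)`, `Ξ(A) = ξ ∘ A ∘ ξ⁺` where `ξ⁺ = ξ* ∘ υ` and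
`υ = (ξ ξ*)⁻¹` is realised by the equivalence `ue : W ≃ W'`. -/
def Xi (ξ : X →ₗ[F] W) (ξs : W' →ₗ[F] X) (ue : W ≃ₗ[F] W') (A : X →ₗ[F] X) : W →ₗ[F] W :=
  ξ ∘ₗ A ∘ₗ (ξs ∘ₗ ue.toLinearMap)

/-- The subgroup condition `h ∈ H_Y`: `h` is an isometry of `(X, Φ|_X)` fixing `Y^⊥`
pointwise. -/
def IsHY (S : GSSetup F W X W') (Y : Submodule F X) (h : X ≃ₗ[F] X) : Prop :=
  (∀ x y : X, S.Φ (0, h x, 0) (0, h y, 0) = S.Φ (0, x, 0) (0, y, 0)) ∧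
  ∀ x ∈ perpY S Y, h x = x

/-- The form `Ψ_W` on `W`: `Ψ_W(w₁, w₂) = Φ(ξ⁺ w₁, ξ⁺ w₂)` with `ξ⁺ = ξ* ∘ υ = ξs ∘ ue`. -/
def PsiW (S : GSSetup F W X W') (ξs : W' →ₗ[F] X) (ue : W ≃ₗ[F] W') (w₁ w₂ : W) : F :=
  S.Φ (0, ξs (ue w₁), 0) (0, ξs (ue w₂), 0)

/-- `Norm(n(ξ, η)) = 1 + ξ* ∘ η⁻¹ ∘ ξ`, the Goldberg–Shahidi norm of `n(ξ, η) ∈ N'`;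
here the invertible `η` is realised by the equivalence `ηe : W' ≃ W` and `ξs = ξ*`. -/
def NormMap (ξ : X →ₗ[F] W) (ξs : W' →ₗ[F] X) (ηe : W' ≃ₗ[F] W) : X →ₗ[F] X :=
  LinearMap.id + ξs ∘ₗ ηe.symm.toLinearMap ∘ₗ ξ

lemma nondegX_aux (S : GSSetup F W X W') (x : X)
    (hx : ∀ y : X, S.Φ (0, x, 0) (0, y, 0) = 0) : x = 0 := by
  have h0 : ((0 : W), x, (0 : W')) = 0 := by
    apply S.nondeg
    rintro ⟨w, y, w'⟩
    have hd : ((w : W), y, (w' : W')) = ((w, 0, w') : W × X × W') + (0, y, 0) := by simp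
    rw [hd, map_add, S.orthX, hx, add_zero]
  simpa using congrArg (fun v : W × X × W' => v.2.1) h0

lemma nondegW_aux (S : GSSetup F W X W') (w : W)
    (hw : ∀ w' : W', S.Φ (w, 0, 0) (0, 0, w') = 0) : w = 0 := by
  have hmid : ∀ y : X, S.Φ (w, 0, 0) (0, y, 0) = 0 := by
    intro y
    rcases S.symm_or_alt with hs | ha
    · rw [hs]; simpa using S.orthX y w 0
    · rw [ha]
      have := S.orthX y w 0
      rw [this, neg_zero]
  have h0 : ((w : W), (0 : X), (0 : W')) = 0 := by
    apply S.nondeg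
    rintro ⟨w₂, y, w₂'⟩
    have hd : ((w₂ : W), y, (w₂' : W')) =
        ((w₂, 0, 0) : W × X × W') + (0, y, 0) + (0, 0, w₂') := by simp
    rw [hd, map_add, map_add, S.isoW, hmid, hw, add_zero, add_zero]
  simpa using congrArg (fun v : W × X × W' => v.1) h0

/-- Let `n = n(ξ, η) ∈ N'` and let `m = m(g, h)` be the element of the Levi
subgroup `M` acting as `g ∈ GL(W)` on `W`, as the isometry `h` on `X`, and correspondingly
(as `(g*)⁻¹`) on `W'`.  Then `Norm(m n m⁻¹) = h ∘ Norm(n) ∘ h⁻¹`.  Moreover, for any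
`g ∈ GL(W)` the pair `(g ξ, g η g*)` again satisfies the defining relation, and
`Norm(n(ξ, η)) = Norm(n(g ξ, g η g*))`. -/
theorem statement_6 [FiniteDimensional F W] [FiniteDimensional F X] [FiniteDimensional F W']
    (S : GSSetup F W X W')
    (ξ : X →ₗ[F] W) (ξs : W' →ₗ[F] X) (ηe : W' ≃ₗ[F] W) (ηs : W' →ₗ[F] W)
    (hξs : ∀ (w' : W') (x : X), S.Φ (0, ξs w', 0) (0, x, 0) = S.Φ (0, 0, w') (ξ x, 0, 0))
    (hηs : ∀ w₁' w₂' : W', S.Φ (ηs w₁', 0, 0) (0, 0, w₂') = S.Φ (0, 0, w₁') (ηe w₂', 0, 0))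
    (hrel : ηe.toLinearMap + ηs + ξ ∘ₗ ξs = 0)
    (n : (W × X × W') →ₗ[F] (W × X × W'))
    (hn : ∀ (w : W) (x : X) (w' : W'),
      n (w, x, w') = (w + ξ x + ηe w', x - ξs w', w'))
    -- the Levi element `m = m(g, h)`:
    (g : W ≃ₗ[F] W) (h : X ≃ₗ[F] X) (gW' : W' ≃ₗ[F] W')
    (m : (W × X × W') ≃ₗ[F] (W × X × W'))
    (hm : ∀ (w : W) (x : X) (w' : W'), m (w, x, w') = (g w, h x, gW' w'))
    (hmiso : ∀ v₁ v₂ : W × X × W', S.Φ (m v₁) (m v₂) = S.Φ v₁ v₂)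
    -- data of `m n m⁻¹ = n(ξ₂, η₂) ∈ N'`:
    (ξ₂ : X →ₗ[F] W) (ξ₂s : W' →ₗ[F] X) (η₂e : W' ≃ₗ[F] W)
    (hξ₂s : ∀ (w' : W') (x : X), S.Φ (0, ξ₂s w', 0) (0, x, 0) = S.Φ (0, 0, w') (ξ₂ x, 0, 0))
    (hconj : ∀ (w : W) (x : X) (w' : W'),
      (m.toLinearMap ∘ₗ n ∘ₗ m.symm.toLinearMap) (w, x, w')
        = (w + ξ₂ x + η₂e w', x - ξ₂s w', w'))
    -- the adjoint `g*` of `g` and the data of the pair `(g ξ, g η g*)`: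
    (gs : W' ≃ₗ[F] W')
    (hgs : ∀ (w' : W') (w : W), S.Φ (0, 0, gs w') (w, 0, 0) = S.Φ (0, 0, w') (g w, 0, 0))
    (ξ₃s : W' →ₗ[F] X)
    (hξ₃s : ∀ (w' : W') (x : X),
      S.Φ (0, ξ₃s w', 0) (0, x, 0) = S.Φ (0, 0, w') ((g.toLinearMap ∘ₗ ξ) x, 0, 0))
    (η₃s : W' →ₗ[F] W)
    (hη₃s : ∀ w₁' w₂' : W',
      S.Φ (η₃s w₁', 0, 0) (0, 0, w₂')
        = S.Φ (0, 0, w₁') ((gs.trans (ηe.trans g)) w₂', 0, 0)) :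
    -- (i) `Norm(m n m⁻¹) = h ∘ Norm(n) ∘ h⁻¹`
    (NormMap ξ₂ ξ₂s η₂e = h.toLinearMap ∘ₗ NormMap ξ ξs ηe ∘ₗ h.symm.toLinearMap)
    -- (ii) `(g ξ, g η g*)` satisfies the defining relation
    ∧ ((gs.trans (ηe.trans g)).toLinearMap + η₃s + (g.toLinearMap ∘ₗ ξ) ∘ₗ ξ₃s = 0)
    -- (iii) `Norm(n(g ξ, g η g*)) = Norm(n(ξ, η))`
    ∧ (NormMap (g.toLinearMap ∘ₗ ξ) ξ₃s (gs.trans (ηe.trans g)) = NormMap ξ ξs ηe) := by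
  -- component identities extracted from `hconj`
  have hmsymm : ∀ (w : W) (x : X) (w' : W'),
      m.symm (w, x, w') = (g.symm w, h.symm x, gW'.symm w') := by
    intro w x w'
    apply m.injective
    rw [m.apply_symm_apply, hm]
    simp
  have hconj' : ∀ (w : W) (x : X) (w' : W'),
      ((w : W) + ξ₂ x + η₂e w', x - ξ₂s w', w')
        = (g (g.symm w + ξ (h.symm x) + ηe (gW'.symm w')),
           h (h.symm x - ξs (gW'.symm w')), w') := by
    intro w x w'
    rw [← hconj]
    simp only [LinearMap.comp_apply, LinearEquiv.coe_coe, hmsymm, hn, hm,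
      LinearEquiv.apply_symm_apply]
  have hξ₂ : ∀ x : X, ξ₂ x = g (ξ (h.symm x)) := by
    intro x
    have := congrArg (fun v : W × X × W' => v.1) (hconj' 0 x 0)
    simpa using this
  have hη₂ : ∀ w' : W', η₂e w' = g (ηe (gW'.symm w')) := by
    intro w'
    have := congrArg (fun v : W × X × W' => v.1) (hconj' 0 0 w')
    simpa using this
  have hξ₂s' : ∀ w' : W', ξ₂s w' = h (ξs (gW'.symm w')) := by
    intro w'
    have := congrArg (fun v : W × X × W' => v.2.1) (hconj' 0 0 w')
    simp only [map_zero, zero_sub, zero_add, map_sub, map_neg] at this ⊢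
    simpa using this
  have hη₂symm : ∀ u : W, η₂e.symm u = gW' (ηe.symm (g.symm u)) := by
    intro u
    apply η₂e.injective
    rw [η₂e.apply_symm_apply, hη₂]
    simp
  -- adjoint flip for `g`
  have hflip : ∀ (w : W) (w' : W'),
      S.Φ (g w, 0, 0) (0, 0, w') = S.Φ (w, 0, 0) (0, 0, gs w') := by
    intro w w'
    rcases S.symm_or_alt with hs | ha
    · rw [hs, ← hgs, hs]
    · rw [ha, ← hgs, ha, neg_neg]
  -- identify `ξ₃s` and `η₃s`
  have hξ₃ : ∀ w' : W', ξ₃s w' = ξs (gs w') := by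
    intro w'
    have key : ∀ x : X, S.Φ (0, ξ₃s w' - ξs (gs w'), 0) (0, x, 0) = 0 := by
      intro x
      have hd : ((0 : W), ξ₃s w' - ξs (gs w'), (0 : W'))
          = ((0, ξ₃s w', 0) : W × X × W') - (0, ξs (gs w'), 0) := by simp
      rw [hd, map_sub, LinearMap.sub_apply, hξ₃s, hξs, hgs]
      simp
    have := nondegX_aux S _ key
    rwa [sub_eq_zero] at this
  have hη₃ : ∀ w' : W', η₃s w' = g (ηs (gs w')) := by
    intro w'
    have key : ∀ w₂' : W', S.Φ (η₃s w' - g (ηs (gs w')), 0, 0) (0, 0, w₂') = 0 := by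
      intro w₂'
      have hd : ((η₃s w' - g (ηs (gs w')) : W), (0 : X), (0 : W'))
          = ((η₃s w', 0, 0) : W × X × W') - (g (ηs (gs w')), 0, 0) := by simp
      rw [hd, map_sub, LinearMap.sub_apply, hη₃s, hflip, hηs, hgs]
      simp
    have := nondegW_aux S _ key
    rwa [sub_eq_zero] at this
  refine ⟨?_, ?_, ?_⟩
  · -- (i)
    ext x
    simp only [NormMap, LinearMap.add_apply, LinearMap.comp_apply, LinearMap.id_apply,
      LinearEquiv.coe_coe, hξ₂, hη₂symm, hξ₂s']
    simp
  · -- (ii)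
    ext w'
    have h0 : ηe (gs w') + ηs (gs w') + ξ (ξs (gs w')) = 0 := by
      have := LinearMap.ext_iff.mp hrel (gs w')
      simpa using this
    have := congrArg g h0
    simp only [map_add, map_zero] at this
    simpa [hη₃, hξ₃] using this
  · -- (iii)
    ext x
    have hsymm3 : ∀ u : W, (gs.trans (ηe.trans g)).symm u = gs.symm (ηe.symm (g.symm u)) := by
      intro u; simp
    simp only [NormMap, LinearMap.add_apply, LinearMap.comp_apply, LinearMap.id_apply,
      LinearEquiv.coe_coe, hsymm3, hξ₃]
    simp
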